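/- Let X ≤ Y ≤ Z be free R-modules of finite rank r ≥ 1, with bases {x_1,…,x_r}, {y_1,…,y_r}, and {z_1,…,z_r} respectively. Let A ∈ M_r(R) (respectively B ∈ M_r(R)) be the matrix whose j-th column consists of the coordinates of x_j (respectively y_j) relative to the basis {z_1,…,z_r}. If det(A) = det(B), then X = Y. -/

import Mathlib

/-- Lemma `Z0`: if `X ≤ Y ≤ Z` are free `R`-modules of rank `r ≥ 1` with bases
whose coordinate matrices relative to a basis of `Z` have equal determinants,
then `X = Y`. -/
theorem stmt_9 {R : Type*} [CommRing R] [IsDomain R] [IsPrincipalIdealRing R]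
    {Z : Type*} [AddCommGroup Z] [Module R Z]
    {r : ℕ} (hr : 1 ≤ r)
    (X Y : Submodule R Z) (hXY : X ≤ Y)
    (bx : Module.Basis (Fin r) R X) (by' : Module.Basis (Fin r) R Y) (bz : Module.Basis (Fin r) R Z)
    (A B : Matrix (Fin r) (Fin r) R)
    (hA : ∀ i j, A i j = bz.repr (bx j : Z) i)
    (hB : ∀ i j, B i j = bz.repr (by' j : Z) i)
    (hdet : A.det = B.det) :
    X = Y := by
  classical
  -- det B ≠ 0
  have hBne : B.det ≠ 0 := by
    intro h
    obtain ⟨v, hv0, hv⟩ := Matrix.exists_mulVec_eq_zero_iff.mpr h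
    apply hv0
    have hsum : (∑ j, v j • by' j) = 0 := by
      apply Subtype.coe_injective
      apply bz.repr.injective
      ext i
      have : (B.mulVec v) i = 0 := by rw [hv]; rfl
      simp only [Matrix.mulVec, dotProduct, hB] at this
      push_cast [Submodule.coe_sum]
      simp only [map_sum, map_smul]
      simpa [mul_comm] using this
    have := Fintype.linearIndependent_iff.mp by'.linearIndependent v hsum
    funext j; exact this j
  -- the coordinate matrix of the inclusion
  set f := Submodule.inclusion hXY with hf
  set C := LinearMap.toMatrix bx by' f with hC
  have hAB : A = B * C := by
    ext i j
    have hbx : (bx j : Z) = ∑ k, C k j • (by' k : Z) := by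
      have h1 : (f (bx j) : Z) = (bx j : Z) := rfl
      have h2 : f (bx j) = ∑ k, C k j • by' k := by
        simp only [hC, LinearMap.toMatrix_apply]
        exact (by'.sum_repr (f (bx j))).symm
      rw [← h1, h2]
      push_cast [Submodule.coe_sum]
      rfl
    rw [hA, hbx, Matrix.mul_apply]
    simp only [map_sum, map_smul, Finsupp.coe_finset_sum, Finset.sum_apply,
      Finsupp.coe_smul, Pi.smul_apply, smul_eq_mul, hB]
    exact Finset.sum_congr rfl fun k _ => mul_comm _ _
  have hdetC : C.det = 1 := by
    have : B.det * C.det = B.det * 1 := by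
      rw [mul_one, ← Matrix.det_mul, ← hAB, hdet]
    exact mul_left_cancel₀ hBne this
  have hu : IsUnit (LinearMap.toMatrix bx by' f).det := by
    rw [← hC, hdetC]; exact isUnit_one
  have hsurj : Function.Surjective f := (LinearEquiv.ofIsUnitDet hu).surjective
  refine le_antisymm hXY fun y hy => ?_
  obtain ⟨x, hx⟩ := hsurj ⟨y, hy⟩
  have : (x : Z) = y := congrArg Subtype.val hx
  rw [← this]; exact x.2
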